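/- If S ∈ hom(𝓗₋₊) satisfies 𝔉ₛ(S) ≥ 0 (positive semidefinite on 𝓗₊₋), then 𝔉ₛ(e^{S}) ≥ 0, where e^{S} denotes the operator exponential of S. -/

import Mathlib

open Matrix
open scoped ComplexInnerProductSpace ComplexOrder

lemma aux_real_of_nonneg {z : ℂ} (h : 0 ≤ z) : star z = z := by
  rw [Complex.nonneg_iff] at h
  simp [Complex.ext_iff, ← h.2]

lemma aux_herm {ι : Type} [Fintype ι] [DecidableEq ι] (M : Matrix ι ι ℂ)
    (h : ∀ c : ι → ℂ, 0 ≤ star c ⬝ᵥ M *ᵥ c) : M.IsHermitian := by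
  classical
  set s : (ι → ℂ) → (ι → ℂ) → ℂ := fun x y => star x ⬝ᵥ M *ᵥ y with hs_def
  have hs : ∀ c : ι → ℂ, star (s c c) = s c c := fun c => aux_real_of_nonneg (h c)
  have hadd : ∀ x y : ι → ℂ, s (x + y) (x + y) = s x x + s x y + s y x + s y y := by
    intro x y
    simp only [hs_def, star_add, add_dotProduct, Matrix.mulVec_add,
      dotProduct_add]
    ring
  have hsmul : ∀ (a : ℂ) (x y : ι → ℂ), s (a • x) y = star a * s x y := by
    intro a x y
    simp [hs_def, smul_dotProduct, star_smul, smul_eq_mul]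
  have hsmul' : ∀ (a : ℂ) (x y : ι → ℂ), s x (a • y) = a * s x y := by
    intro a x y
    simp [hs_def, Matrix.mulVec_smul, dotProduct_smul, smul_eq_mul]
  have key : ∀ x y : ι → ℂ, star (s x y) = s y x := by
    intro x y
    simp only [Complex.star_def]
    have e1 : (starRingEnd ℂ) (s x y) + (starRingEnd ℂ) (s y x) = s x y + s y x := by
      have h1 := hs (x + y)
      rw [hadd x y] at h1
      simp only [Complex.star_def, map_add] at h1
      have hxx := hs x; have hyy := hs y
      simp only [Complex.star_def] at hxx hyy
      rw [hxx, hyy] at h1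
      linear_combination h1
    have e2 : -Complex.I * (starRingEnd ℂ) (s x y) + Complex.I * (starRingEnd ℂ) (s y x)
        = Complex.I * s x y - Complex.I * s y x := by
      have h2 := hs (x + Complex.I • y)
      rw [hadd x (Complex.I • y)] at h2
      rw [hsmul, hsmul', hsmul] at h2
      rw [hsmul'] at h2
      have hxx := hs x; have hyy := hs y
      simp only [Complex.star_def] at hxx hyy
      simp only [Complex.star_def, map_add, _root_.map_mul, map_neg, Complex.conj_I] at h2
      rw [hxx, hyy] at h2
      linear_combination h2
    linear_combination (1/2 : ℂ) * e1 + (Complex.I/2) * e2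
      + ((1/2 : ℂ) * ((starRingEnd ℂ) (s x y) + s x y - (starRingEnd ℂ) (s y x) - s y x))
        * Complex.I_sq
  rw [Matrix.IsHermitian]
  ext p q
  rw [Matrix.conjTranspose_apply]
  have hx : ∀ p' q' : ι, s (Pi.single p' (1:ℂ)) (Pi.single q' (1:ℂ)) = M p' q' := by
    intro p' q'
    simp [hs_def, dotProduct, Matrix.mulVec, Pi.single_apply,
      apply_ite (star (R := ℂ)), Finset.sum_ite_eq', mul_comm]
  have := key (Pi.single q (1:ℂ)) (Pi.single p (1:ℂ))
  rw [hx, hx] at this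
  exact this

open scoped MatrixOrder in
lemma auxD_pos {ι : Type} [Fintype ι] [DecidableEq ι]
    (B C : Matrix (ι × ι) (ι × ι) ℂ)
    (hB : ∀ c : ι × ι → ℂ, 0 ≤ star c ⬝ᵥ B *ᵥ c)
    (hC : ∀ c : ι × ι → ℂ, 0 ≤ star c ⬝ᵥ C *ᵥ c) :
    ∀ c : ι × ι → ℂ, 0 ≤ star c ⬝ᵥ
      (Matrix.of fun p q : ι × ι =>
        ∑ r : ι × ι, B (p.1, r.2) (q.1, r.1) * C (r.2, p.2) (r.1, q.2)) *ᵥ c := by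
  classical
  obtain ⟨L, hL⟩ : ∃ L : Matrix (ι × ι) (ι × ι) ℂ, B = Lᴴ * L :=
    CStarAlgebra.nonneg_iff_eq_star_mul_self.mp
      (Matrix.posSemidef_iff_dotProduct_mulVec.mpr ⟨aux_herm B hB, hB⟩).nonneg
  obtain ⟨N, hN⟩ : ∃ N : Matrix (ι × ι) (ι × ι) ℂ, C = Nᴴ * N :=
    CStarAlgebra.nonneg_iff_eq_star_mul_self.mp
      (Matrix.posSemidef_iff_dotProduct_mulVec.mpr ⟨aux_herm C hC, hC⟩).nonneg
  set E : Matrix ((ι × ι) × (ι × ι)) (ι × ι) ℂ :=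
    Matrix.of (fun ab kl => ∑ n : ι, L ab.1 (kl.1, n) * N ab.2 (n, kl.2)) with hE
  have key : (Matrix.of fun p q : ι × ι =>
      ∑ r : ι × ι, B (p.1, r.2) (q.1, r.1) * C (r.2, p.2) (r.1, q.2)) = Eᴴ * E := by
    ext p q
    simp only [Matrix.of_apply, Matrix.mul_apply, Matrix.conjTranspose_apply, hE, hL, hN]
    have h1 : ∑ r : ι × ι,
          (∑ j : ι × ι, star (L j (p.1, r.2)) * L j (q.1, r.1)) *
          (∑ k : ι × ι, star (N k (r.2, p.2)) * N k (r.1, q.2))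
        = ∑ j : ι × ι, ∑ k : ι × ι, ∑ r : ι × ι,
          (star (L j (p.1, r.2)) * L j (q.1, r.1)) *
          (star (N k (r.2, p.2)) * N k (r.1, q.2)) := by
      simp only [Finset.sum_mul_sum]
      rw [Finset.sum_comm]
      exact Finset.sum_congr rfl fun j _ => Finset.sum_comm
    rw [h1]
    have h2 : ∑ jk : (ι × ι) × (ι × ι),
          star (∑ n : ι, L jk.1 (p.1, n) * N jk.2 (n, p.2)) *
          (∑ n : ι, L jk.1 (q.1, n) * N jk.2 (n, q.2))
        = ∑ j : ι × ι, ∑ k : ι × ι, ∑ n : ι, ∑ n' : ι,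
          (star (L j (p.1, n)) * star (N k (n, p.2))) *
          (L j (q.1, n') * N k (n', q.2)) := by
      rw [Fintype.sum_prod_type]
      refine Finset.sum_congr rfl fun j _ => Finset.sum_congr rfl fun k _ => ?_
      simp only [star_sum, star_mul', Finset.sum_mul_sum]
    rw [h2]
    refine Finset.sum_congr rfl fun j _ => Finset.sum_congr rfl fun k _ => ?_
    rw [Fintype.sum_prod_type]
    rw [Finset.sum_comm]
    refine Finset.sum_congr rfl fun n _ => Finset.sum_congr rfl fun n' _ => ?_
    ring
  rw [key]
  exact fun c => (Matrix.posSemidef_conjTranspose_mul_self E).dotProduct_mulVec_nonneg c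

/-- If `𝔉ₛ(S) ≥ 0` then `𝔉ₛ(e^S) ≥ 0`. -/
theorem sft_exp_nonneg
{Hp Hm Hmp Hpm : Type}
    [NormedAddCommGroup Hp] [InnerProductSpace ℂ Hp] [FiniteDimensional ℂ Hp]
    [NormedAddCommGroup Hm] [InnerProductSpace ℂ Hm] [FiniteDimensional ℂ Hm]
    [NormedAddCommGroup Hmp] [InnerProductSpace ℂ Hmp] [FiniteDimensional ℂ Hmp]
    [NormedAddCommGroup Hpm] [InnerProductSpace ℂ Hpm] [FiniteDimensional ℂ Hpm]
(θ : Hp ≃ₗ⋆[ℂ] Hm)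
    (hθ : ∀ x x' : Hp, ⟪x, x'⟫ = ⟪θ x', θ x⟫)
(tmp : Hm →ₗ[ℂ] Hp →ₗ[ℂ] Hmp) (tpm : Hp →ₗ[ℂ] Hm →ₗ[ℂ] Hpm)
    (htmp : ∀ (y : Hm) (x : Hp) (y' : Hm) (x' : Hp),
      ⟪tmp y x, tmp y' x'⟫ = ⟪y, y'⟫ * ⟪x, x'⟫)
    (htpm : ∀ (x : Hp) (y : Hm) (x' : Hp) (y' : Hm),
      ⟪tpm x y, tpm x' y'⟫ = ⟪x, x'⟫ * ⟪y, y'⟫)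
    (hmp_span : ⊤ ≤ Submodule.span ℂ (Set.range fun p : Hm × Hp => tmp p.1 p.2))
    (hpm_span : ⊤ ≤ Submodule.span ℂ (Set.range fun p : Hp × Hm => tpm p.1 p.2))
(Fs : (Hmp →L[ℂ] Hmp) → (Hpm →L[ℂ] Hpm))
    (hFs : ∀ (T : Hmp →L[ℂ] Hmp) (x x' : Hp) (y y' : Hm),
      ⟪tpm x y, Fs T (tpm x' y')⟫ = ⟪tmp (θ x') x, T (tmp y' (θ.symm y))⟫)
    (S : Hmp →L[ℂ] Hmp) (hS : ∀ w : Hpm, 0 ≤ ⟪w, Fs S w⟫) :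
    ∀ w : Hpm, 0 ≤ ⟪w, Fs (NormedSpace.exp S) w⟫ := by
  classical
  intro w
  set κ := Fin (Module.finrank ℂ Hp) with hκ
  let b : OrthonormalBasis κ ℂ Hp := stdOrthonormalBasis ℂ Hp
  have hθθ : ∀ a c : Hp, ⟪θ a, θ c⟫ = ⟪c, a⟫ := fun a c => (hθ c a).symm
  have hbi : ∀ i j : κ, ⟪b i, b j⟫ = if i = j then (1:ℂ) else 0 :=
    orthonormal_iff_ite.mp b.orthonormal
  set u : κ × κ → Hmp := fun r => tmp (θ (b r.1)) (b r.2) with hu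
  set v : κ × κ → Hpm := fun r => tpm (b r.1) (θ (b r.2)) with hv
  -- orthonormality of u
  have hu_ite : ∀ r s : κ × κ, ⟪u r, u s⟫ = if r = s then (1:ℂ) else 0 := by
    intro r s
    rw [hu]
    simp only
    rw [htmp, hθθ, hbi, hbi]
    by_cases h1 : r.1 = s.1 <;> by_cases h2 : r.2 = s.2 <;>
      simp [Prod.ext_iff, h1, h2, eq_comm]
  have hv_ite : ∀ r s : κ × κ, ⟪v r, v s⟫ = if r = s then (1:ℂ) else 0 := by
    intro r s
    rw [hv]
    simp only
    rw [htpm, hθθ, hbi, hbi]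
    by_cases h1 : r.1 = s.1 <;> by_cases h2 : r.2 = s.2 <;>
      simp [Prod.ext_iff, h1, h2, eq_comm]
  have hu_on : Orthonormal ℂ u := orthonormal_iff_ite.mpr hu_ite
  have hv_on : Orthonormal ℂ v := orthonormal_iff_ite.mpr hv_ite
  -- spanning
  have hu_sp : ⊤ ≤ Submodule.span ℂ (Set.range u) := by
    refine le_trans hmp_span (Submodule.span_le.mpr ?_)
    rintro _ ⟨⟨y, x⟩, rfl⟩
    simp only
    have hdec : (tmp y) x = ∑ j, ∑ i,
        (b.repr x j * (starRingEnd ℂ) (b.repr (θ.symm y) i)) • u (i, j) := by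
      conv_lhs => rw [← b.sum_repr x]
      rw [map_sum]
      refine Finset.sum_congr rfl fun j _ => ?_
      rw [LinearMap.map_smul]
      conv_lhs => rw [← θ.apply_symm_apply y, ← b.sum_repr (θ.symm y)]
      rw [map_sum, map_sum tmp, LinearMap.sum_apply, Finset.smul_sum]
      refine Finset.sum_congr rfl fun i _ => ?_
      rw [LinearEquiv.map_smulₛₗ, LinearMap.map_smul, LinearMap.smul_apply,
        smul_smul, starRingEnd_apply]
    rw [hdec]
    exact Submodule.sum_mem _ fun j _ => Submodule.sum_mem _ fun i _ =>
      Submodule.smul_mem _ _ (Submodule.subset_span ⟨(i, j), rfl⟩)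
  have hv_sp : ⊤ ≤ Submodule.span ℂ (Set.range v) := by
    refine le_trans hpm_span (Submodule.span_le.mpr ?_)
    rintro _ ⟨⟨x, y⟩, rfl⟩
    simp only
    have hdec : (tpm x) y = ∑ i, ∑ j,
        (b.repr x i * (starRingEnd ℂ) (b.repr (θ.symm y) j)) • v (i, j) := by
      conv_lhs => rw [← b.sum_repr x]
      rw [map_sum tpm, LinearMap.sum_apply]
      refine Finset.sum_congr rfl fun i _ => ?_
      rw [LinearMap.map_smul, LinearMap.smul_apply]
      conv_lhs => rw [← θ.apply_symm_apply y, ← b.sum_repr (θ.symm y)]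
      rw [map_sum, map_sum, Finset.smul_sum]
      refine Finset.sum_congr rfl fun j _ => ?_
      rw [LinearEquiv.map_smulₛₗ, LinearMap.map_smul, smul_smul, starRingEnd_apply]
    rw [hdec]
    exact Submodule.sum_mem _ fun i _ => Submodule.sum_mem _ fun j _ =>
      Submodule.smul_mem _ _ (Submodule.subset_span ⟨(i, j), rfl⟩)
  let U : OrthonormalBasis (κ × κ) ℂ Hmp := OrthonormalBasis.mk hu_on hu_sp
  let V : OrthonormalBasis (κ × κ) ℂ Hpm := OrthonormalBasis.mk hv_on hv_sp
  have hU : ∀ r, U r = u r := fun r => by rw [OrthonormalBasis.coe_mk]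
  have hV : ∀ r, V r = v r := fun r => by rw [OrthonormalBasis.coe_mk]
  -- the matrix
  set A : (Hmp →L[ℂ] Hmp) → Matrix (κ × κ) (κ × κ) ℂ :=
    fun T => Matrix.of fun p q => ⟪u (q.1, p.1), T (u (q.2, p.2))⟫ with hA
  have hAv : ∀ (T : Hmp →L[ℂ] Hmp) (p q : κ × κ), ⟪v p, Fs T (v q)⟫ = A T p q := by
    intro T p q
    rw [hv]
    simp only
    rw [hFs T (b p.1) (b q.1) (θ (b p.2)) (θ (b q.2))]
    rw [θ.symm_apply_apply]
    rfl
  -- decomposition of a vector in Hpm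
  have hdecomp : ∀ w' : Hpm, w' = ∑ p, ⟪v p, w'⟫ • v p := by
    intro w'
    conv_lhs => rw [← V.sum_repr' w']
    exact Finset.sum_congr rfl fun p _ => by rw [hV]
  -- the quadratic form identity
  have hform : ∀ (T : Hmp →L[ℂ] Hmp) (w' : Hpm),
      ⟪w', Fs T w'⟫ =
        star (fun p => ⟪v p, w'⟫) ⬝ᵥ A T *ᵥ (fun p => ⟪v p, w'⟫) := by
    intro T w'
    conv_lhs => rw [hdecomp w']
    rw [map_sum, sum_inner]
    simp only [dotProduct, Matrix.mulVec, Pi.star_apply]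
    refine Finset.sum_congr rfl fun p _ => ?_
    simp only [inner_smul_left, _root_.map_smul, inner_sum, inner_smul_right,
      Finset.mul_sum]
    refine Finset.sum_congr rfl fun q _ => ?_
    rw [hAv]
    simp only [Complex.star_def]
    ring
  -- positivity of A S
  have hposA : ∀ c : κ × κ → ℂ, 0 ≤ star c ⬝ᵥ A S *ᵥ c := by
    intro c
    set w0 : Hpm := ∑ p, c p • v p with hw0
    have hcw : ∀ p, ⟪v p, w0⟫ = c p := by
      intro p
      rw [hw0]
      rw [inner_sum]
      simp only [inner_smul_right, hv_ite]
      simp [Finset.sum_ite_eq', mul_comm]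
      convert Finset.sum_ite_eq Finset.univ p c <;> simp
    have h0 := hS w0
    rw [hform S w0] at h0
    have : (fun p => ⟪v p, w0⟫) = c := funext hcw
    rwa [this] at h0
  -- positivity of A 1
  have hAone : ∀ c : κ × κ → ℂ, 0 ≤ star c ⬝ᵥ A 1 *ᵥ c := by
    intro c
    set d : κ × κ → ℂ := fun p => if p.1 = p.2 then 1 else 0 with hd
    have hA1 : ∀ p q : κ × κ, A 1 p q = star (d p) * d q := by
      intro p q
      show ⟪u (q.1, p.1), (1 : Hmp →L[ℂ] Hmp) (u (q.2, p.2))⟫ = _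
      rw [ContinuousLinearMap.one_apply, hu_ite]
      by_cases h1 : p.1 = p.2 <;> by_cases h2 : q.1 = q.2 <;>
        simp [hd, Prod.ext_iff, h1, h2]
    have hone : star c ⬝ᵥ A 1 *ᵥ c = star (d ⬝ᵥ c) * (d ⬝ᵥ c) := by
      have h2 : star (d ⬝ᵥ c) * (d ⬝ᵥ c)
          = ∑ p : κ × κ, ∑ q : κ × κ, star (d p) * star (c p) * (d q * c q) := by
        rw [dotProduct, star_sum, Finset.sum_mul_sum]
        exact Finset.sum_congr rfl fun p _ => Finset.sum_congr rfl fun q _ => by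
          rw [star_mul']
      have h1 : star c ⬝ᵥ A 1 *ᵥ c
          = ∑ p : κ × κ, ∑ q : κ × κ, star (d p) * star (c p) * (d q * c q) := by
        simp only [dotProduct, Matrix.mulVec, Pi.star_apply, hA1,
          Finset.mul_sum]
        exact Finset.sum_congr rfl fun p _ => Finset.sum_congr rfl fun q _ => by ring
      rw [h1, h2]
    rw [hone]
    exact star_mul_self_nonneg _
  -- multiplicativity
  have hAmul : ∀ T₁ T₂ : Hmp →L[ℂ] Hmp,
      A (T₁ * T₂) = Matrix.of fun p q : (κ × κ) =>
        ∑ r : κ × κ, A T₁ (p.1, r.2) (q.1, r.1) * A T₂ (r.2, p.2) (r.1, q.2) := by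
    intro T₁ T₂
    ext p q
    show ⟪u (q.1, p.1), (T₁ * T₂) (u (q.2, p.2))⟫ = _
    rw [ContinuousLinearMap.mul_apply]
    have hres : T₂ (u (q.2, p.2)) = ∑ r, ⟪u r, T₂ (u (q.2, p.2))⟫ • u r := by
      conv_lhs => rw [← U.sum_repr' (T₂ (u (q.2, p.2)))]
      exact Finset.sum_congr rfl fun r _ => by rw [hU]
    rw [hres, map_sum, inner_sum]
    simp only [_root_.map_smul, inner_smul_right]
    rw [Matrix.of_apply]
    refine Finset.sum_congr rfl fun r _ => ?_
    show _ = A T₁ (p.1, r.2) (q.1, r.1) * A T₂ (r.2, p.2) (r.1, q.2)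
    rw [hA]
    simp only [Matrix.of_apply]
    rw [mul_comm]
  -- positivity of powers
  have hpow : ∀ k : ℕ, ∀ c : κ × κ → ℂ, 0 ≤ star c ⬝ᵥ A (S ^ k) *ᵥ c := by
    intro k
    induction k with
    | zero => rw [pow_zero]; exact hAone
    | succ n ih =>
        rw [pow_succ, hAmul]
        exact auxD_pos (A (S ^ n)) (A S) ih hposA
  -- assemble
  set c : κ × κ → ℂ := fun p => ⟪v p, w⟫ with hc
  let φ₀ : (Hmp →L[ℂ] Hmp) →ₗ[ℂ] ℂ :=
    { toFun := fun T => star c ⬝ᵥ A T *ᵥ c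
      map_add' := by
        intro T₁ T₂
        show star c ⬝ᵥ A (T₁ + T₂) *ᵥ c = star c ⬝ᵥ A T₁ *ᵥ c + star c ⬝ᵥ A T₂ *ᵥ c
        have : A (T₁ + T₂) = A T₁ + A T₂ := by
          ext p q
          show ⟪u (q.1, p.1), (T₁ + T₂) (u (q.2, p.2))⟫ = _
          rw [ContinuousLinearMap.add_apply, inner_add_right]
          rfl
        rw [this, Matrix.add_mulVec, dotProduct_add]
      map_smul' := by
        intro a T
        show star c ⬝ᵥ A (a • T) *ᵥ c = (RingHom.id ℂ) a • (star c ⬝ᵥ A T *ᵥ c)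
        have : A (a • T) = a • A T := by
          ext p q
          show ⟪u (q.1, p.1), (a • T) (u (q.2, p.2))⟫ = _
          rw [ContinuousLinearMap.smul_apply, inner_smul_right]
          rfl
        rw [this, RingHom.id_apply, Matrix.smul_mulVec, dotProduct_smul,
          smul_eq_mul] }
  let φ : (Hmp →L[ℂ] Hmp) →L[ℂ] ℂ := LinearMap.toContinuousLinearMap φ₀
  have hφ : ∀ T, φ T = star c ⬝ᵥ A T *ᵥ c := fun T => rfl
  rw [hform (NormedSpace.exp S) w, ← hφ]
  have hexp : NormedSpace.exp S = ∑' n : ℕ, ((n.factorial : ℂ))⁻¹ • S ^ n := by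
    rw [NormedSpace.exp_eq_tsum ℂ]
  rw [hexp, φ.map_tsum (NormedSpace.expSeries_summable' (𝕂 := ℂ) S)]
  refine tsum_nonneg fun k => ?_
  rw [_root_.map_smul, smul_eq_mul]
  refine mul_nonneg ?_ ?_
  · have h : ((k.factorial : ℂ))⁻¹ = ((((k.factorial : ℝ))⁻¹ : ℝ) : ℂ) := by
      push_cast; ring
    rw [h, Complex.zero_le_real]
    positivity
  · rw [hφ]
    exact hpow k c
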